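/- Let 0 < p, p̂ ≤ 1/2 and τ ≥ 0, and suppose p̂ ∈ [(1+τ)⁻¹ p, (1+τ) p]. Then (1+τ)⁻⁴ · U(p)/p² ≤ U(p̂)/p̂² ≤ (1+τ)⁴ · U(p)/p². -/
import Mathlib


open Real

/-- Standard Gaussian density. -/
noncomputable def gphi (x : ℝ) : ℝ := (Real.sqrt (2 * Real.pi))⁻¹ * Real.exp (-(x ^ 2) / 2)

/-- Standard Gaussian CDF. -/
noncomputable def Phi (r : ℝ) : ℝ := ∫ x in Set.Iic r, gphi x

/-- Inverse of the standard Gaussian CDF (on (0,1)). -/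
noncomputable def PhiInv : ℝ → ℝ := Function.invFun Phi

/-- `U(p) := (φ(Φ⁻¹(1 - p)))²`. -/
noncomputable def Ufun (p : ℝ) : ℝ := (gphi (PhiInv (1 - p))) ^ 2

open MeasureTheory Set


lemma gphi_eq (x : ℝ) : gphi x = (Real.sqrt (2 * Real.pi))⁻¹ * Real.exp (-(1/2) * x ^ 2) := by
  rw [gphi]; ring_nf

lemma gphi_pos (x : ℝ) : 0 < gphi x := by
  rw [gphi]
  positivity

lemma integrable_gphi : Integrable gphi := by
  have : gphi = fun x => (Real.sqrt (2 * Real.pi))⁻¹ * Real.exp (-(1/2) * x ^ 2) :=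
    funext gphi_eq
  rw [this]
  exact (integrable_exp_neg_mul_sq (by norm_num : (0:ℝ) < 1/2)).const_mul _

lemma integral_gphi : ∫ x, gphi x = 1 := by
  simp_rw [gphi_eq]
  rw [MeasureTheory.integral_const_mul, integral_gaussian]
  rw [show (π / (1/2)) = 2 * π by ring]
  rw [inv_mul_cancel₀]
  positivity

lemma Phi_sub (a b : ℝ) : Phi b - Phi a = ∫ x in a..b, gphi x :=
  intervalIntegral.integral_Iic_sub_Iic integrable_gphi.integrableOn integrable_gphi.integrableOn

lemma Phi_strictMono : StrictMono Phi := by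
  intro a b hab
  have h : 0 < ∫ x in a..b, gphi x :=
    intervalIntegral.intervalIntegral_pos_of_pos
      (integrable_gphi.intervalIntegrable) (fun x => gphi_pos x) hab
  linarith [Phi_sub a b]

lemma Phi_nonneg (r : ℝ) : 0 ≤ Phi r :=
  MeasureTheory.setIntegral_nonneg measurableSet_Iic (fun x _ => (gphi_pos x).le)

lemma Phi_pos (r : ℝ) : 0 < Phi r := by
  have h := Phi_sub (r - 1) r
  have h2 : 0 < ∫ x in (r-1)..r, gphi x :=
    intervalIntegral.intervalIntegral_pos_of_pos
      (integrable_gphi.intervalIntegrable) (fun x => gphi_pos x) (by linarith)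
  have := Phi_nonneg (r - 1)
  linarith

lemma Phi_continuous : Continuous Phi := by
  have h : Continuous fun r => ∫ x in (0:ℝ)..r, gphi x :=
    intervalIntegral.continuous_primitive (fun a b => integrable_gphi.intervalIntegrable) 0
  have : Phi = fun r => Phi 0 + ∫ x in (0:ℝ)..r, gphi x := by
    funext r
    have := Phi_sub 0 r
    linarith
  rw [this]
  exact continuous_const.add h

lemma Phi_tendsto_atTop : Filter.Tendsto Phi Filter.atTop (nhds 1) := by
  have h : Filter.Tendsto (fun r => ∫ x in (0:ℝ)..r, gphi x) Filter.atTop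
      (nhds (∫ x in Ioi (0:ℝ), gphi x)) :=
    MeasureTheory.intervalIntegral_tendsto_integral_Ioi 0 integrable_gphi.integrableOn
      Filter.tendsto_id
  have heq : Phi 0 + ∫ x in Ioi (0:ℝ), gphi x = 1 := by
    rw [show Phi 0 = ∫ x in Iic (0:ℝ), gphi x from rfl]
    rw [intervalIntegral.integral_Iic_add_Ioi integrable_gphi.integrableOn
      integrable_gphi.integrableOn, integral_gphi]
  have : Phi = fun r => Phi 0 + ∫ x in (0:ℝ)..r, gphi x := by
    funext r; have := Phi_sub 0 r; linarith
  rw [this, ← heq]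
  exact tendsto_const_nhds.add h

lemma Phi_tendsto_atBot : Filter.Tendsto Phi Filter.atBot (nhds 0) := by
  have h : Filter.Tendsto (fun r => ∫ x in r..(0:ℝ), gphi x) Filter.atBot
      (nhds (∫ x in Iic (0:ℝ), gphi x)) :=
    MeasureTheory.intervalIntegral_tendsto_integral_Iic 0 integrable_gphi.integrableOn
      Filter.tendsto_id
  have key : Filter.Tendsto (fun r => Phi 0 - ∫ x in r..(0:ℝ), gphi x) Filter.atBot
      (nhds (Phi 0 - ∫ x in Iic (0:ℝ), gphi x)) := tendsto_const_nhds.sub h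
  have e1 : Phi 0 - ∫ x in Iic (0:ℝ), gphi x = 0 := sub_self _
  have e2 : (fun r => Phi 0 - ∫ x in r..(0:ℝ), gphi x) = Phi := by
    funext r; have := Phi_sub r 0; linarith
  rwa [e1, e2] at key

lemma Phi_lt_one (r : ℝ) : Phi r < 1 := by
  have := Phi_strictMono (lt_add_one r)
  have h2 : Phi (r + 1) ≤ 1 := by
    by_contra hc
    push_neg at hc
    obtain ⟨R, hR⟩ := (Filter.eventually_atTop.1
      (Phi_tendsto_atTop.eventually (eventually_lt_nhds (by linarith : (1:ℝ) < Phi (r+1)))))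
    have hmax := hR (max R (r + 1)) (le_max_left _ _)
    have := Phi_strictMono.monotone (le_max_right R (r + 1))
    linarith
  linarith

lemma Phi_surjOn : ∀ y : ℝ, 0 < y → y < 1 → ∃ x, Phi x = y := by
  intro y hy0 hy1
  obtain ⟨a, ha⟩ := Filter.eventually_atBot.1
    (Phi_tendsto_atBot.eventually (eventually_lt_nhds hy0))
  obtain ⟨b, hb⟩ := Filter.eventually_atTop.1
    (Phi_tendsto_atTop.eventually (eventually_gt_nhds hy1))
  have ha' : Phi a < y := ha a le_rfl
  have hb' : y < Phi b := hb b le_rfl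
  have hab : a ≤ b := by
    by_contra hc
    push_neg at hc
    have := Phi_strictMono hc
    linarith
  obtain ⟨x, _, hx⟩ := intermediate_value_Icc hab Phi_continuous.continuousOn
    ⟨ha'.le, hb'.le⟩
  exact ⟨x, hx⟩
lemma Phi_PhiInv {y : ℝ} (hy0 : 0 < y) (hy1 : y < 1) : Phi (PhiInv y) = y := by
  obtain ⟨x, hx⟩ := Phi_surjOn y hy0 hy1
  exact Function.invFun_eq ⟨x, hx⟩

lemma gphi_neg (x : ℝ) : gphi (-x) = gphi x := by
  simp [gphi]

lemma Phi_neg (x : ℝ) : Phi (-x) = 1 - Phi x := by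
  have h1 : Phi (-x) = ∫ t in Ioi x, gphi t := by
    rw [show Phi (-x) = ∫ t in Iic (-x), gphi t from rfl]
    rw [← integral_comp_neg_Ioi]
    simp_rw [gphi_neg]
  have h2 : Phi x + ∫ t in Ioi x, gphi t = 1 := by
    rw [show Phi x = ∫ t in Iic x, gphi t from rfl,
      intervalIntegral.integral_Iic_add_Ioi integrable_gphi.integrableOn
        integrable_gphi.integrableOn, integral_gphi]
  linarith

lemma Phi_zero : Phi 0 = 1 / 2 := by
  have := Phi_neg 0
  rw [neg_zero] at this
  linarith

noncomputable def Mills (x : ℝ) : ℝ := ∫ s in Ioi (0:ℝ), Real.exp (-(s^2)/2 - x*s)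

-- translation lemma
lemma integral_Ioi_comp_add (f : ℝ → ℝ) (c : ℝ) :
    (∫ s in Ioi (0:ℝ), f (s + c)) = ∫ t in Ioi c, f t := by
  have A : MeasurableEmbedding fun x : ℝ => x + c :=
    (Homeomorph.addRight c).isClosedEmbedding.measurableEmbedding
  have := MeasurableEmbedding.setIntegral_map (μ := volume) A f (Ioi c)
  rw [MeasureTheory.map_add_right_eq_self (volume : Measure ℝ) c] at this
  have hpre : (fun x : ℝ => x + c) ⁻¹' Ioi c = Ioi (0:ℝ) := by
    ext x; simp
  rw [hpre] at this
  rw [this]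


lemma integrable_mills (x : ℝ) :
    IntegrableOn (fun s => Real.exp (-(s^2)/2 - x*s)) (Ioi (0:ℝ)) := by
  have h : Integrable (fun s : ℝ => Real.exp (x^2/2) * ((Real.sqrt (2*π)) * gphi (s + x))) := by
    have : Integrable (fun s : ℝ => gphi (s + x)) := integrable_gphi.comp_add_right x
    exact (this.const_mul _).const_mul _
  have he : (fun s : ℝ => Real.exp (x^2/2) * ((Real.sqrt (2*π)) * gphi (s + x)))
      = fun s => Real.exp (-(s^2)/2 - x*s) := by
    funext s
    rw [gphi]
    rw [show rexp (x ^ 2 / 2) * (√(2 * π) * ((√(2 * π))⁻¹ * rexp (-((s+x) ^ 2) / 2)))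
        = (√(2 * π) * (√(2 * π))⁻¹) * (rexp (x ^ 2 / 2) * rexp (-((s+x) ^ 2) / 2)) by ring]
    rw [mul_inv_cancel₀ (by positivity), one_mul, ← Real.exp_add]
    congr 1
    ring
  rw [← he]
  exact h.integrableOn

lemma mills_eq (x : ℝ) : Phi (-x) = gphi x * Mills x := by
  have h1 : Phi (-x) = ∫ t in Ioi x, gphi t := by
    rw [show Phi (-x) = ∫ t in Iic (-x), gphi t from rfl, ← integral_comp_neg_Ioi]
    simp_rw [gphi_neg]
  rw [h1, ← integral_Ioi_comp_add gphi x, Mills, ← MeasureTheory.integral_const_mul]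
  congr 1
  funext s
  rw [gphi, gphi]
  rw [show (√(2 * π))⁻¹ * rexp (-x ^ 2 / 2) * rexp (-(s ^ 2) / 2 - x * s)
      = (√(2 * π))⁻¹ * (rexp (-(x ^ 2) / 2) * rexp (-(s ^ 2) / 2 - x * s)) by ring,
    ← Real.exp_add]
  congr 2
  ring

lemma mills_anti {x y : ℝ} (hxy : x ≤ y) : Mills y ≤ Mills x := by
  apply MeasureTheory.setIntegral_mono_on (integrable_mills y) (integrable_mills x)
    measurableSet_Ioi
  intro s hs
  apply Real.exp_le_exp.2
  have : x * s ≤ y * s := mul_le_mul_of_nonneg_right hxy (le_of_lt hs)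
  linarith

lemma hazard_mono {x y : ℝ} (hxy : x ≤ y) : gphi x * Phi (-y) ≤ gphi y * Phi (-x) := by
  rw [mills_eq, mills_eq]
  calc gphi x * (gphi y * Mills y) = gphi y * gphi x * Mills y := by ring
  _ ≤ gphi y * gphi x * Mills x :=
      mul_le_mul_of_nonneg_left (mills_anti hxy) (mul_pos (gphi_pos y) (gphi_pos x)).le
  _ = gphi y * (gphi x * Mills x) := by ring
lemma PhiInv_spec {p : ℝ} (hp0 : 0 < p) (hp1 : p ≤ 1/2) :
    Phi (PhiInv (1 - p)) = 1 - p ∧ 0 ≤ PhiInv (1 - p) := by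
  have h1 : (0:ℝ) < 1 - p := by linarith
  have h2 : 1 - p < 1 := by linarith
  have hP := Phi_PhiInv h1 h2
  refine ⟨hP, ?_⟩
  by_contra hc
  push_neg at hc
  have := Phi_strictMono hc
  rw [hP, Phi_zero] at this
  linarith

lemma key {p q : ℝ} (hp0 : 0 < p) (hq2 : q ≤ 1/2) (hpq : p ≤ q) :
    Ufun q / q^2 ≤ Ufun p / p^2 ∧ Ufun p ≤ Ufun q := by
  have hq0 : 0 < q := lt_of_lt_of_le hp0 hpq
  have hp2 : p ≤ 1/2 := le_trans hpq hq2
  obtain ⟨hPx, hx0⟩ := PhiInv_spec hp0 hp2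
  obtain ⟨hPy, hy0⟩ := PhiInv_spec hq0 hq2
  set x := PhiInv (1 - p) with hxdef
  set y := PhiInv (1 - q) with hydef
  have hyx : y ≤ x := by
    by_contra hc; push_neg at hc
    have := Phi_strictMono hc
    rw [hPx, hPy] at this; linarith
  have hpx : Phi (-x) = p := by rw [Phi_neg, hPx]; ring
  have hqy : Phi (-y) = q := by rw [Phi_neg, hPy]; ring
  have hUq : Ufun q = (gphi y)^2 := by rw [Ufun, ← hydef]
  have hUp : Ufun p = (gphi x)^2 := by rw [Ufun, ← hxdef]
  constructor
  · have hz := hazard_mono hyx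
    rw [hpx, hqy] at hz
    rw [hUq, hUp, div_le_div_iff₀ (by positivity) (by positivity)]
    nlinarith [gphi_pos x, gphi_pos y, mul_nonneg (gphi_pos y).le hp0.le,
      mul_nonneg (gphi_pos x).le hq0.le]
  · rw [hUq, hUp]
    have hg : gphi x ≤ gphi y := by
      rw [gphi, gphi]
      have he : Real.exp (-(x^2)/2) ≤ Real.exp (-(y^2)/2) := by
        apply Real.exp_le_exp.2
        nlinarith
      have : (0:ℝ) ≤ (Real.sqrt (2 * Real.pi))⁻¹ := by positivity
      exact mul_le_mul_of_nonneg_left he this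
    nlinarith [gphi_pos x]

theorem stmt6 (p phat τ : ℝ) (hp0 : 0 < p) (hp : p ≤ 1 / 2)
    (hphat0 : 0 < phat) (hphat : phat ≤ 1 / 2) (hτ : 0 ≤ τ)
    (hlb : (1 + τ)⁻¹ * p ≤ phat) (hub : phat ≤ (1 + τ) * p) :
    (1 + τ)⁻¹ ^ 4 * (Ufun p / p ^ 2) ≤ Ufun phat / phat ^ 2 ∧
      Ufun phat / phat ^ 2 ≤ (1 + τ) ^ 4 * (Ufun p / p ^ 2) := by
  have ht1 : (1:ℝ) ≤ 1 + τ := by linarith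
  have ht0 : (0:ℝ) < 1 + τ := by linarith
  have hinv1 : (1 + τ)⁻¹ ≤ 1 := by
    rw [inv_le_one_iff₀]; right; exact ht1
  have hinv0 : (0:ℝ) < (1 + τ)⁻¹ := by positivity
  have hUp0 : 0 < Ufun p := by rw [Ufun]; exact pow_pos (gphi_pos _) 2
  have hUphat0 : 0 < Ufun phat := by rw [Ufun]; exact pow_pos (gphi_pos _) 2
  have hdivp : 0 < Ufun p / p^2 := by positivity
  rcases le_total p phat with hle | hle
  · obtain ⟨hA, hB⟩ := key hp0 hphat hle
    constructor
    · calc (1 + τ)⁻¹ ^ 4 * (Ufun p / p ^ 2)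
          ≤ (1 + τ)⁻¹ ^ 2 * (Ufun p / p ^ 2) := by
            apply mul_le_mul_of_nonneg_right _ hdivp.le
            exact pow_le_pow_of_le_one hinv0.le hinv1 (by norm_num)
      _ = Ufun p / ((1 + τ) * p) ^ 2 := by
            rw [mul_pow, inv_pow, inv_mul_eq_div, div_div]
            ring_nf
      _ ≤ Ufun p / phat ^ 2 := by
            apply div_le_div_of_nonneg_left hUp0.le (by positivity)
            have : 0 < phat := hphat0
            nlinarith
      _ ≤ Ufun phat / phat ^ 2 := by
            apply div_le_div_of_nonneg_right hB (by positivity)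
    · calc Ufun phat / phat ^ 2 ≤ Ufun p / p ^ 2 := hA
      _ ≤ (1 + τ) ^ 4 * (Ufun p / p ^ 2) := by
            nlinarith [pow_le_pow_left₀ (by norm_num : (0:ℝ) ≤ 1) ht1 4]
  · obtain ⟨hA, hB⟩ := key hphat0 hp hle
    constructor
    · calc (1 + τ)⁻¹ ^ 4 * (Ufun p / p ^ 2) ≤ 1 * (Ufun p / p ^ 2) := by
            apply mul_le_mul_of_nonneg_right _ hdivp.le
            exact pow_le_one₀ hinv0.le hinv1
      _ = Ufun p / p ^ 2 := one_mul _
      _ ≤ Ufun phat / phat ^ 2 := hA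
    · have hlb' : 0 < (1 + τ)⁻¹ * p := by positivity
      calc Ufun phat / phat ^ 2 ≤ Ufun p / phat ^ 2 :=
            div_le_div_of_nonneg_right hB (by positivity)
      _ ≤ Ufun p / ((1 + τ)⁻¹ * p) ^ 2 := by
            apply div_le_div_of_nonneg_left hUp0.le (by positivity)
            nlinarith
      _ = (1 + τ) ^ 2 * (Ufun p / p ^ 2) := by
            rw [mul_pow, div_mul_eq_div_div, inv_pow, div_inv_eq_mul]
            ring
      _ ≤ (1 + τ) ^ 4 * (Ufun p / p ^ 2) := by
            apply mul_le_mul_of_nonneg_right _ hdivp.le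
            exact pow_le_pow_right₀ ht1 (by norm_num)
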